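/- Let a ≥ 1 and b ≥ 1 be natural numbers, θ > 0 real, and let α_H > 0, α_L > 0, β_H > 0, β_L > 0 be reals with α_H − α_L β_H > 0. Define G(x) = (1 − e^{−θx} · Σ_{p=0}^{b−1} (θx)^p/p!)^a. Then lim_{γ→∞} ( − log( G(β_H/(γ(α_H − α_L β_H))) + G(β_L/(α_L γ)) ) / log(γ) ) = a·b. (This is the diversity order of the low-priority user, Eq. (38): D_L = m_L K_L J under the HCS method and D_L = m_L K_S K_L J under the LCS method, where in each case the product equals a·b.) -/

import Mathlib

open Real Filter Finset

-- bounds on f x = 1 - exp(-x) * Σ_{p<b} x^p/p!  for x ∈ (0,1]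
lemma f_lower {b : ℕ} (hb : 1 ≤ b) {x : ℝ} (hx0 : 0 < x) (hx1 : x ≤ 1) :
    Real.exp (-1) * x ^ b / b.factorial ≤
      1 - Real.exp (-x) * ∑ p ∈ Finset.range b, x ^ p / p.factorial := by
  have hS : (∑ p ∈ Finset.range b, x ^ p / p.factorial) + x ^ b / b.factorial ≤ Real.exp x := by
    have := Real.sum_le_exp_of_nonneg hx0.le (b + 1)
    rwa [Finset.sum_range_succ] at this
  have hx : 1 - Real.exp (-x) * ∑ p ∈ Finset.range b, x ^ p / p.factorial
      = Real.exp (-x) * (Real.exp x - ∑ p ∈ Finset.range b, x ^ p / p.factorial) := by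
    rw [mul_sub, ← Real.exp_add, neg_add_cancel, Real.exp_zero]
  rw [hx]
  have h1 : Real.exp (-1) ≤ Real.exp (-x) := Real.exp_le_exp.2 (by linarith)
  have h2 : x ^ b / b.factorial ≤ Real.exp x - ∑ p ∈ Finset.range b, x ^ p / p.factorial := by
    linarith
  calc Real.exp (-1) * x ^ b / b.factorial = Real.exp (-1) * (x ^ b / b.factorial) := by ring
    _ ≤ Real.exp (-x) * (Real.exp x - ∑ p ∈ Finset.range b, x ^ p / p.factorial) := by
        apply mul_le_mul h1 h2 (by positivity) (Real.exp_pos _).le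

lemma f_upper {b : ℕ} (hb : 1 ≤ b) {x : ℝ} (hx0 : 0 < x) (hx1 : x ≤ 1) :
    1 - Real.exp (-x) * ∑ p ∈ Finset.range b, x ^ p / p.factorial ≤
      x ^ b * ((b + 1) / (b.factorial * b)) := by
  have hub := Real.exp_bound' hx0.le hx1 (Nat.pos_of_ne_zero (by omega) : 0 < b)
  have hx : 1 - Real.exp (-x) * ∑ p ∈ Finset.range b, x ^ p / p.factorial
      = Real.exp (-x) * (Real.exp x - ∑ p ∈ Finset.range b, x ^ p / p.factorial) := by
    rw [mul_sub, ← Real.exp_add, neg_add_cancel, Real.exp_zero]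
  rw [hx]
  have he : Real.exp (-x) ≤ 1 := Real.exp_le_one_iff.2 (by linarith)
  have h2 : Real.exp x - ∑ p ∈ Finset.range b, x ^ p / p.factorial
      ≤ x ^ b * ((b + 1) / (b.factorial * b)) := by
    rw [mul_div_assoc] at hub
    linarith
  calc Real.exp (-x) * (Real.exp x - ∑ p ∈ Finset.range b, x ^ p / p.factorial)
      ≤ 1 * (x ^ b * ((b + 1) / (b.factorial * b))) := by
        apply mul_le_mul he h2 ?_ zero_le_one
        · have hS : (∑ p ∈ Finset.range b, x ^ p / p.factorial) ≤ Real.exp x :=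
            Real.sum_le_exp_of_nonneg hx0.le b
          linarith
    _ = x ^ b * ((b + 1) / (b.factorial * b)) := one_mul _

lemma Gterm_bound {b : ℕ} (hb : 1 ≤ b) (a : ℕ) {θ c : ℝ} (hθ : 0 < θ) (hc : 0 < c) :
    ∀ᶠ γ : ℝ in atTop,
      (Real.exp (-1) * (θ * c) ^ b / b.factorial) ^ a ≤
        (1 - Real.exp (-θ * (c / γ)) *
          ∑ p ∈ Finset.range b, (θ * (c / γ)) ^ p / p.factorial) ^ a * γ ^ (a * b)
      ∧ (1 - Real.exp (-θ * (c / γ)) *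
          ∑ p ∈ Finset.range b, (θ * (c / γ)) ^ p / p.factorial) ^ a * γ ^ (a * b) ≤
        ((θ * c) ^ b * ((b + 1) / (b.factorial * b))) ^ a := by
  filter_upwards [eventually_ge_atTop (max 1 (θ * c)), eventually_gt_atTop (0 : ℝ)]
    with γ hγ hγ0
  set x : ℝ := θ * (c / γ) with hxdef
  have hx0 : 0 < x := by positivity
  have hx1 : x ≤ 1 := by
    rw [hxdef, mul_div_assoc']
    rw [div_le_one hγ0]
    exact le_trans (le_max_right _ _) hγ
  have hneg : -θ * (c / γ) = -x := by rw [hxdef]; ring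
  have hlow := f_lower hb hx0 hx1
  have hup := f_upper hb hx0 hx1
  have hxγ : x ^ b * γ ^ b = (θ * c) ^ b := by
    rw [hxdef, ← mul_pow, mul_div_assoc', div_mul_cancel₀ _ hγ0.ne']
  have hpow : γ ^ (a * b) = (γ ^ b) ^ a := by rw [mul_comm, pow_mul]
  set F : ℝ := 1 - Real.exp (-θ * (c / γ)) *
      ∑ p ∈ Finset.range b, (θ * (c / γ)) ^ p / p.factorial with hF
  have hFx : F = 1 - Real.exp (-x) * ∑ p ∈ Finset.range b, x ^ p / p.factorial := by
    rw [hF, hneg]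
  have hγb : (0:ℝ) < γ ^ b := by positivity
  have key : F ^ a * γ ^ (a * b) = (F * γ ^ b) ^ a := by
    rw [hpow, mul_pow]
  constructor
  · rw [key]
    apply pow_le_pow_left₀ (by positivity)
    calc Real.exp (-1) * (θ * c) ^ b / b.factorial
        = (Real.exp (-1) * x ^ b / b.factorial) * γ ^ b := by
          rw [← hxγ]; ring
      _ ≤ F * γ ^ b := by
          rw [hFx]; exact mul_le_mul_of_nonneg_right hlow hγb.le
  · rw [key]
    apply pow_le_pow_left₀
    · rw [hFx]
      have hS : (∑ p ∈ Finset.range b, x ^ p / p.factorial) ≤ Real.exp x :=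
        Real.sum_le_exp_of_nonneg hx0.le b
      have : Real.exp (-x) * ∑ p ∈ Finset.range b, x ^ p / p.factorial ≤ 1 := by
        calc Real.exp (-x) * ∑ p ∈ Finset.range b, x ^ p / p.factorial
            ≤ Real.exp (-x) * Real.exp x := by
              apply mul_le_mul_of_nonneg_left hS (Real.exp_pos _).le
          _ = 1 := by rw [← Real.exp_add, neg_add_cancel, Real.exp_zero]
      exact mul_nonneg (by linarith) hγb.le
    · calc F * γ ^ b ≤ (x ^ b * ((b + 1) / (b.factorial * b))) * γ ^ b := by
            rw [hFx]; exact mul_le_mul_of_nonneg_right hup hγb.le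
        _ = (θ * c) ^ b * ((b + 1) / (b.factorial * b)) := by rw [← hxγ]; ring


/-- Diversity order of the low-priority user (Eq. (38)):
with `G(x) = (1 − e^{−θx} Σ_{p<b} (θx)^p/p!)^a`,
`lim_{γ→∞} (−log( G(β_H/(γ(α_H − α_L β_H))) + G(β_L/(α_L γ)) ) / log γ) = a b`. -/
theorem stmt_11 (a b : ℕ) (ha : 1 ≤ a) (hb : 1 ≤ b) (θ : ℝ) (hθ : 0 < θ)
    (αH αL βH βL : ℝ) (hαH : 0 < αH) (hαL : 0 < αL) (hβH : 0 < βH) (hβL : 0 < βL)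
    (h : 0 < αH - αL * βH)
    (G : ℝ → ℝ)
    (hG : ∀ x, G x =
      (1 - Real.exp (-θ * x) * ∑ p ∈ Finset.range b, (θ * x) ^ p / p.factorial) ^ a) :
    Filter.Tendsto
      (fun γ : ℝ =>
        -Real.log (G (βH / (γ * (αH - αL * βH))) + G (βL / (αL * γ))) / Real.log γ)
      Filter.atTop (nhds ((a * b : ℕ) : ℝ)) := by
  set c1 : ℝ := βH / (αH - αL * βH) with hc1def
  set c2 : ℝ := βL / αL with hc2def
  have hc1 : 0 < c1 := div_pos hβH h
  have hc2 : 0 < c2 := div_pos hβL hαL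
  have harg1 : ∀ γ : ℝ, βH / (γ * (αH - αL * βH)) = c1 / γ := fun γ => by
    rw [hc1def, div_div, mul_comm]
  have harg2 : ∀ γ : ℝ, βL / (αL * γ) = c2 / γ := fun γ => by
    rw [hc2def, div_div]
  set E : ℝ → ℝ := fun γ => G (c1 / γ) + G (c2 / γ) with hE
  have hEeq : ∀ γ : ℝ, G (βH / (γ * (αH - αL * βH))) + G (βL / (αL * γ)) = E γ := fun γ => by
    rw [hE, harg1, harg2]
  set m : ℝ := (Real.exp (-1) * (θ * c1) ^ b / b.factorial) ^ a with hm
  set M : ℝ := ((θ * c1) ^ b * ((b + 1) / (b.factorial * b))) ^ a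
    + ((θ * c2) ^ b * ((b + 1) / (b.factorial * b))) ^ a with hM
  have hmpos : 0 < m := by
    rw [hm]
    have : (0:ℝ) < (b.factorial : ℝ) := by positivity
    positivity
  have hbnd : ∀ᶠ γ : ℝ in Filter.atTop,
      m ≤ E γ * γ ^ (a * b) ∧ E γ * γ ^ (a * b) ≤ M := by
    filter_upwards [Gterm_bound hb a hθ hc1, Gterm_bound hb a hθ hc2,
      eventually_gt_atTop (0:ℝ)] with γ h1 h2 hγ0
    have e1 : G (c1 / γ) * γ ^ (a * b) =
        (1 - Real.exp (-θ * (c1 / γ)) *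
          ∑ p ∈ Finset.range b, (θ * (c1 / γ)) ^ p / p.factorial) ^ a * γ ^ (a * b) := by
      rw [hG]
    have e2 : G (c2 / γ) * γ ^ (a * b) =
        (1 - Real.exp (-θ * (c2 / γ)) *
          ∑ p ∈ Finset.range b, (θ * (c2 / γ)) ^ p / p.factorial) ^ a * γ ^ (a * b) := by
      rw [hG]
    have hdist : E γ * γ ^ (a * b) = G (c1 / γ) * γ ^ (a * b) + G (c2 / γ) * γ ^ (a * b) := by
      rw [hE]; ring
    constructor
    · rw [hdist, e1, e2]
      have hlow2 : (0:ℝ) ≤ (1 - Real.exp (-θ * (c2 / γ)) *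
          ∑ p ∈ Finset.range b, (θ * (c2 / γ)) ^ p / p.factorial) ^ a * γ ^ (a * b) := by
        refine le_trans ?_ h2.1
        have : (0:ℝ) < (b.factorial : ℝ) := by positivity
        positivity
      linarith [h1.1]
    · rw [hdist, e1, e2, hM]
      linarith [h1.2, h2.2]
  -- eventual rewrite of the function
  have hfun : ∀ᶠ γ : ℝ in Filter.atTop,
      -Real.log (G (βH / (γ * (αH - αL * βH))) + G (βL / (αL * γ))) / Real.log γ
        = ((a * b : ℕ) : ℝ) - Real.log (E γ * γ ^ (a * b)) / Real.log γ := by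
    filter_upwards [hbnd, eventually_gt_atTop (1:ℝ)] with γ hγ hγ1
    have hγ0 : (0:ℝ) < γ := lt_trans one_pos hγ1
    have hlogpos : 0 < Real.log γ := Real.log_pos hγ1
    have hpowpos : (0:ℝ) < γ ^ (a * b) := by positivity
    have hEpos : 0 < E γ := by nlinarith [hγ.1, hmpos]
    rw [hEeq, Real.log_mul hEpos.ne' hpowpos.ne', Real.log_pow]
    push_cast
    field_simp
    ring
  rw [Filter.tendsto_congr' hfun]
  have hq : Filter.Tendsto (fun γ : ℝ => Real.log (E γ * γ ^ (a * b)) / Real.log γ)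
      Filter.atTop (nhds 0) := by
    have hMm : m ≤ M := by
      rcases hbnd.exists with ⟨γ, hγ1, hγ2⟩
      linarith
    have hMpos : 0 < M := lt_of_lt_of_le hmpos hMm
    apply tendsto_of_tendsto_of_tendsto_of_le_of_le'
      (Filter.Tendsto.div_atTop (tendsto_const_nhds (x := Real.log m)) Real.tendsto_log_atTop)
      (Filter.Tendsto.div_atTop (tendsto_const_nhds (x := Real.log M)) Real.tendsto_log_atTop)
    · filter_upwards [hbnd, eventually_gt_atTop (1:ℝ)] with γ hγ hγ1
      have hlogpos : 0 < Real.log γ := Real.log_pos hγ1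
      exact (div_le_div_iff_of_pos_right hlogpos).2 (Real.log_le_log hmpos hγ.1)
    · filter_upwards [hbnd, eventually_gt_atTop (1:ℝ)] with γ hγ hγ1
      have hlogpos : 0 < Real.log γ := Real.log_pos hγ1
      have hEpos : 0 < E γ * γ ^ (a * b) := lt_of_lt_of_le hmpos hγ.1
      exact (div_le_div_iff_of_pos_right hlogpos).2 (Real.log_le_log hEpos hγ.2)
  have := tendsto_const_nhds (x := ((a * b : ℕ) : ℝ)) (f := Filter.atTop (α := ℝ)) |>.sub hq
  simpa using this
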